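/- Let G be a group of unitaries on ℂ^d generated by elements of the form exp(iθP) with θ ∈ ℝ and P ranging over a fixed set S of Hermitian involutions (P† = P, P² = 1). Then a matrix Ω satisfies UᵀΩU = Ω for every U ∈ G if and only if PᵀΩ + ΩP = 0 for every P ∈ S. -/

import Mathlib

open Matrix

attribute [local instance] Matrix.linftyOpNormedRing Matrix.linftyOpNormedAlgebra

private theorem hasDerivAt_comp_ofReal' {E : Type*} [NormedAddCommGroup E] [NormedSpace ℂ E]
    {e : ℂ → E} {e' : E} {z : ℝ} (hf : HasDerivAt e e' ↑z) :
    HasDerivAt (fun y : ℝ => e ↑y) e' z := by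
  have := ((hf.hasFDerivAt.restrictScalars ℝ).comp z
    Complex.ofRealCLM.hasFDerivAt).hasDerivAt
  simpa [Function.comp_def] using this

private theorem exp_intertwine {d : ℕ} (A B Ω : Matrix (Fin d) (Fin d) ℂ)
    (h : A * Ω = Ω * B) :
    NormedSpace.exp A * Ω = Ω * NormedSpace.exp B := by
  have hpow : ∀ n : ℕ, A ^ n * Ω = Ω * B ^ n := by
    intro n
    induction n with
    | zero => simp
    | succ n ih => rw [pow_succ, mul_assoc, h, ← mul_assoc, ih, mul_assoc, ← pow_succ]
  simp only [NormedSpace.exp_eq_tsum ℂ]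
  have hA := NormedSpace.expSeries_summable' (𝕂 := ℂ) A
  have hB := NormedSpace.expSeries_summable' (𝕂 := ℂ) B
  calc (∑' n : ℕ, ((n.factorial : ℂ))⁻¹ • A ^ n) * Ω
      = ∑' n : ℕ, (((n.factorial : ℂ))⁻¹ • A ^ n) * Ω := (hA.tsum_mul_right Ω).symm
    _ = ∑' n : ℕ, Ω * (((n.factorial : ℂ))⁻¹ • B ^ n) := by
        congr 1; funext n
        rw [smul_mul_assoc, mul_smul_comm, hpow n]
    _ = Ω * ∑' n : ℕ, ((n.factorial : ℂ))⁻¹ • B ^ n := hB.tsum_mul_left Ω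

/-- For a group generated by `exp(iθP)` with `P` ranging over a set `S` of Hermitian
involutions, a matrix `Ω` is an invariant bilinear form (`UᵀΩU = Ω` for all `U` in the
generated group) iff `PᵀΩ + ΩP = 0` for every `P ∈ S`. -/
theorem invariant_form_iff_generator_condition (d : ℕ)
    (S : Set (Matrix (Fin d) (Fin d) ℂ))
    (hS : ∀ P ∈ S, Pᴴ = P ∧ P * P = 1)
    (Ω : Matrix (Fin d) (Fin d) ℂ) :
    (∀ U ∈ Submonoid.closure
        {M : Matrix (Fin d) (Fin d) ℂ |
          ∃ θ : ℝ, ∃ P ∈ S, M = NormedSpace.exp ((θ : ℂ) • Complex.I • P)},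
      Uᵀ * Ω * U = Ω) ↔ (∀ P ∈ S, Pᵀ * Ω + Ω * P = 0) := by
  constructor
  · -- forward: differentiate the invariance relation at θ = 0
    intro hinv P hP
    set A : Matrix (Fin d) (Fin d) ℂ := Complex.I • P with hA
    -- the function θ ↦ exp(θ•Aᵀ) * Ω * exp(θ•A) is constantly Ω on ℝ
    have hfconst : ∀ θ : ℝ,
        NormedSpace.exp ((θ : ℂ) • Aᵀ) * Ω * NormedSpace.exp ((θ : ℂ) • A) = Ω := by
      intro θ
      have hmem : NormedSpace.exp ((θ : ℂ) • A) ∈ Submonoid.closure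
          {M : Matrix (Fin d) (Fin d) ℂ |
            ∃ θ : ℝ, ∃ P ∈ S, M = NormedSpace.exp ((θ : ℂ) • Complex.I • P)} :=
        Submonoid.subset_closure ⟨θ, P, hP, rfl⟩
      have := hinv _ hmem
      rwa [← Matrix.exp_transpose, transpose_smul] at this
    -- derivatives
    have h1 := hasDerivAt_comp_ofReal' (hasDerivAt_exp_smul_const (𝕂 := ℂ) Aᵀ (((0 : ℝ) : ℂ)))
    have h2 := hasDerivAt_comp_ofReal' (hasDerivAt_exp_smul_const (𝕂 := ℂ) A (((0 : ℝ) : ℂ)))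
    have hprod := (h1.mul_const Ω).mul h2
    have hzero : HasDerivAt (fun _ : ℝ => Ω) (0 : Matrix (Fin d) (Fin d) ℂ) 0 :=
      hasDerivAt_const _ _
    have heq : (fun θ : ℝ =>
        NormedSpace.exp ((θ : ℂ) • Aᵀ) * Ω * NormedSpace.exp ((θ : ℂ) • A))
        = fun _ : ℝ => Ω := funext hfconst
    change HasDerivAt (fun θ : ℝ =>
        NormedSpace.exp ((θ : ℂ) • Aᵀ) * Ω * NormedSpace.exp ((θ : ℂ) • A)) _ 0 at hprod
    rw [heq] at hprod
    have hD := hprod.unique hzero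
    simp only [Complex.ofReal_zero, zero_smul, NormedSpace.exp_zero, one_mul, mul_one] at hD
    -- hD : Aᵀ * Ω * 1 + 1 * Ω * A = 0  (after simp)
    have hkey : Aᵀ * Ω + Ω * A = 0 := by
      simpa using hD
    have : Complex.I • (Pᵀ * Ω + Ω * P) = 0 := by
      rw [smul_add, hA] at *
      simpa [transpose_smul, smul_mul_assoc, mul_smul_comm] using hkey
    have hI : (Complex.I : ℂ) ≠ 0 := Complex.I_ne_zero
    exact (smul_eq_zero.mp this).resolve_left hI
  · -- backward: closure induction
    intro hgen U hU
    induction hU using Submonoid.closure_induction with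
    | mem M hM =>
      obtain ⟨θ, P, hP, rfl⟩ := hM
      have hanti : Pᵀ * Ω = -(Ω * P) := eq_neg_of_add_eq_zero_left (hgen P hP)
      set A : Matrix (Fin d) (Fin d) ℂ := (θ : ℂ) • Complex.I • P with hA
      have hAt : Aᵀ * Ω = Ω * (-A) := by
        rw [hA]
        simp only [transpose_smul, smul_mul_assoc, mul_smul_comm, mul_neg, smul_neg, hanti]
      have hexp : NormedSpace.exp Aᵀ * Ω = Ω * NormedSpace.exp (-A) :=
        exp_intertwine _ _ _ hAt
      have hinvmul : NormedSpace.exp (-A) * NormedSpace.exp A = 1 := by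
        rw [← Matrix.exp_add_of_commute _ _ ((Commute.refl A).neg_left), neg_add_cancel,
          NormedSpace.exp_zero]
      rw [← Matrix.exp_transpose, mul_assoc, ← mul_assoc _ Ω, hexp, mul_assoc, hinvmul, mul_one]
    | one => simp
    | mul U V hUm hVm hU hV =>
      calc (U * V)ᵀ * Ω * (U * V) = Vᵀ * (Uᵀ * Ω * U) * V := by
            simp only [transpose_mul, mul_assoc]
        _ = Ω := by rw [hU]; exact hV
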